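/- arXiv:2508.04991 — 2 statements merged into one kernel-verified Lean document; each statement's English description precedes it below -/
import Mathlib

section
/- Let K ⊆ ℝⁿ be a nonempty closed set, f = (f_1,…,f_q) a vector polynomial, x̄ ∈ K, and I a nonempty subset of {1,…,q} such that f_i is bounded from below on K_x̄ for every i ∈ I. The following are equivalent: (i) for every sequence x_k ∈ K with ‖x_k‖ → +∞ and f_i(x_k) ≤ f_i(x̄) for all i and all k, one has ‖(f_i(x_k))_{i∈I}‖ → +∞ (i.e., f restricted to K is I-proper at the sublevel f(x̄)); (ii) there exist a closed set S ⊆ ℝⁿ with (K_x̄)_∞ ⊆ S_∞ ⊆ K_∞ and λ ∈ ℝ^q with λ_i ≥ 0 for all i and λ ≠ 0 such that SOL(S_∞, (Σ_{i=1}^q λ_i f_i)^∞) = {0}; (iii) there exists a closed set S ⊆ ℝⁿ with (K_x̄)_∞ ⊆ S_∞ ⊆ K_∞ such that SOL^w(S_∞, f^∞) = {0}; (iv) there exists a closed set S ⊆ ℝⁿ with (K_x̄)_∞ ⊆ S_∞ ⊆ K_∞ such that SOL^s(S_∞, f^∞) = {0}. -/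
open Filter Topology MvPolynomial Bornology

noncomputable section

/-- The asymptotic (recession) cone of a set `A ⊆ ℝⁿ`. -/
def asymCone {n : ℕ} (A : Set (Fin n → ℝ)) : Set (Fin n → ℝ) :=
  {v | ∃ (t : ℕ → ℝ) (x : ℕ → (Fin n → ℝ)),
    Filter.Tendsto t Filter.atTop Filter.atTop ∧ (∀ k, x k ∈ A) ∧
    Filter.Tendsto (fun k => (t k)⁻¹ • x k) Filter.atTop (nhds v)}

/-- Pareto efficient solutions of the vector map `g` on `C`. -/
def SOLs {n q : ℕ} (C : Set (Fin n → ℝ)) (g : Fin q → (Fin n → ℝ) → ℝ) :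
    Set (Fin n → ℝ) :=
  {x | x ∈ C ∧ ¬ ∃ y ∈ C, (∀ i, g i y ≤ g i x) ∧ (∃ i, g i y ≠ g i x)}

/-- Weak Pareto efficient solutions of the vector map `g` on `C`. -/
def SOLw {n q : ℕ} (C : Set (Fin n → ℝ)) (g : Fin q → (Fin n → ℝ) → ℝ) :
    Set (Fin n → ℝ) :=
  {x | x ∈ C ∧ ¬ ∃ y ∈ C, ∀ i, g i y < g i x}

/-- Global minimizers of a scalar function `p` on `C`. -/
def SOLmin {n : ℕ} (C : Set (Fin n → ℝ)) (p : (Fin n → ℝ) → ℝ) :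
    Set (Fin n → ℝ) :=
  {x | x ∈ C ∧ ∀ y ∈ C, p x ≤ p y}

/-- The recession polynomial (leading term: top-degree homogeneous part) of a
polynomial, as a function on `ℝⁿ`. -/
noncomputable def recPoly {n : ℕ} (p : MvPolynomial (Fin n) ℝ) : (Fin n → ℝ) → ℝ :=
  fun x => MvPolynomial.eval x (MvPolynomial.homogeneousComponent p.totalDegree p)

/- ===== Auxiliary lemmas ===== -/

lemma eval_smul_homog {n m : ℕ} {p : MvPolynomial (Fin n) ℝ} (hp : p.IsHomogeneous m)
    (c : ℝ) (x : Fin n → ℝ) : eval (c • x) p = c ^ m * eval x p := by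
  rw [eval_eq', eval_eq', Finset.mul_sum]
  refine Finset.sum_congr rfl fun d hd => ?_
  have hdeg : ∑ i, d i = m := by
    have h1 := hp (mem_support_iff.mp hd)
    rw [← h1]
    simp [Finsupp.weight, Finsupp.linearCombination, Finsupp.sum]
    rw [Finset.sum_subset (Finset.subset_univ d.support)]
    intro i _ hi
    simpa using hi
  rw [← hdeg, ← Finset.prod_pow_eq_pow_sum]
  simp only [Pi.smul_apply, smul_eq_mul, mul_pow, Finset.prod_mul_distrib]
  ring

lemma tendsto_eval_scaled {n : ℕ} (p : MvPolynomial (Fin n) ℝ)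
    (t : ℕ → ℝ) (x : ℕ → Fin n → ℝ) (v : Fin n → ℝ)
    (ht : Filter.Tendsto t Filter.atTop Filter.atTop)
    (hx : Filter.Tendsto (fun k => (t k)⁻¹ • x k) Filter.atTop (nhds v)) :
    Filter.Tendsto (fun k => (t k ^ p.totalDegree)⁻¹ * eval (x k) p) Filter.atTop
      (nhds (eval v (homogeneousComponent p.totalDegree p))) := by
  set d := p.totalDegree with hd
  set y : ℕ → Fin n → ℝ := fun k => (t k)⁻¹ • x k with hy
  have hpos : ∀ᶠ k in atTop, 0 < t k := ht.eventually_gt_atTop 0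
  have key : ∀ j ∈ Finset.range (d + 1),
      Tendsto (fun k => (t k ^ j * (t k ^ d)⁻¹) * eval (y k) (homogeneousComponent j p))
      atTop (nhds ((if j = d then (1:ℝ) else 0) * eval v (homogeneousComponent j p))) := by
    intro j hj
    have heval : Tendsto (fun k => eval (y k) (homogeneousComponent j p)) atTop
        (nhds (eval v (homogeneousComponent j p))) :=
      ((MvPolynomial.continuous_eval _).tendsto v).comp hx
    refine Tendsto.mul ?_ heval
    by_cases hjd : j = d
    · subst hjd
      rw [if_pos rfl]
      refine Tendsto.congr' ?_ tendsto_const_nhds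
      filter_upwards [hpos] with k hk
      rw [mul_inv_cancel₀ (by positivity)]
    · rw [if_neg hjd]
      have hjlt : j < d := lt_of_le_of_ne (Nat.lt_succ_iff.mp (Finset.mem_range.mp hj)) hjd
      have h0 : Tendsto (fun k => ((t k) ^ (d - j))⁻¹) atTop (nhds 0) :=
        tendsto_inv_atTop_zero.comp ((tendsto_pow_atTop (by omega)).comp ht)
      refine Tendsto.congr' ?_ h0
      filter_upwards [hpos] with k hk
      field_simp
      rw [← pow_add, Nat.sub_add_cancel hjlt.le]
  have hsum := tendsto_finset_sum (Finset.range (d + 1)) key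
  have hval : ∑ j ∈ Finset.range (d + 1),
      (if j = d then (1:ℝ) else 0) * eval v (homogeneousComponent j p)
      = eval v (homogeneousComponent d p) := by
    rw [Finset.sum_eq_single d]
    · simp
    · intro b _ hb; simp [hb]
    · intro h; exact absurd (Finset.self_mem_range_succ d) h
  rw [hval] at hsum
  refine Tendsto.congr' ?_ hsum
  filter_upwards [hpos] with k hk
  have hxk : x k = t k • y k := by
    rw [hy]; simp [smul_smul, mul_inv_cancel₀ (ne_of_gt hk)]
  conv_rhs => rw [hxk, ← MvPolynomial.sum_homogeneousComponent p]
  rw [map_sum, Finset.mul_sum, ← hd]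
  refine Finset.sum_congr rfl fun j _ => ?_
  rw [eval_smul_homog (homogeneousComponent_isHomogeneous j p) (t k) (y k)]
  ring

lemma recPoly_le_zero_aux {n : ℕ} (p : MvPolynomial (Fin n) ℝ) (hdp : 1 ≤ p.totalDegree)
    (C : ℝ) (t : ℕ → ℝ) (x : ℕ → Fin n → ℝ) (v : Fin n → ℝ)
    (ht : Filter.Tendsto t Filter.atTop Filter.atTop)
    (hx : Filter.Tendsto (fun k => (t k)⁻¹ • x k) Filter.atTop (nhds v))
    (hb : ∀ k, eval (x k) p ≤ C) :
    eval v (homogeneousComponent p.totalDegree p) ≤ 0 := by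
  have hlim := tendsto_eval_scaled p t x v ht hx
  have hpos : ∀ᶠ k in atTop, 0 < t k := ht.eventually_gt_atTop 0
  have hG : Tendsto (fun k => C * (t k ^ p.totalDegree)⁻¹) atTop (nhds 0) := by
    have := (tendsto_inv_atTop_zero.comp
      ((tendsto_pow_atTop (by omega : p.totalDegree ≠ 0)).comp ht)).const_mul C
    simpa using this
  refine le_of_tendsto_of_tendsto hlim hG ?_
  filter_upwards [hpos] with k hk
  have h1 : (0:ℝ) < t k ^ p.totalDegree := by positivity
  calc (t k ^ p.totalDegree)⁻¹ * eval (x k) p ≤ (t k ^ p.totalDegree)⁻¹ * C :=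
        mul_le_mul_of_nonneg_left (hb k) (by positivity)
    _ = C * (t k ^ p.totalDegree)⁻¹ := by ring

lemma exists_unit_dir {n : ℕ} {A : Set (Fin n → ℝ)} (hA : ¬ Bornology.IsBounded A) :
    ∃ (v : Fin n → ℝ) (t : ℕ → ℝ) (x : ℕ → Fin n → ℝ), ‖v‖ = 1 ∧
      Filter.Tendsto t Filter.atTop Filter.atTop ∧ (∀ k, x k ∈ A) ∧
      Filter.Tendsto (fun k => (t k)⁻¹ • x k) Filter.atTop (nhds v) := by
  have h : ∀ k : ℕ, ∃ x ∈ A, (k : ℝ) < ‖x‖ := by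
    intro k
    by_contra hc
    push_neg at hc
    exact hA (isBounded_iff_forall_norm_le.mpr ⟨k, hc⟩)
  choose x hxA hxn using h
  have hxpos : ∀ k, 0 < ‖x k‖ := fun k => lt_of_le_of_lt (Nat.cast_nonneg k) (hxn k)
  set u : ℕ → Fin n → ℝ := fun k => ‖x k‖⁻¹ • x k with hu
  have husph : ∀ k, u k ∈ Metric.sphere (0 : Fin n → ℝ) 1 := by
    intro k
    simp only [Metric.mem_sphere, dist_zero_right, hu, norm_smul, norm_inv, norm_norm]
    exact inv_mul_cancel₀ (ne_of_gt (hxpos k))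
  obtain ⟨v, hv, φ, hφ, hconv⟩ := (isCompact_sphere (0 : Fin n → ℝ) 1).tendsto_subseq husph
  refine ⟨v, fun k => ‖x (φ k)‖, fun k => x (φ k), ?_, ?_, fun k => hxA (φ k), hconv⟩
  · simpa [dist_zero_right] using hv
  · refine tendsto_atTop_mono (fun k => ?_) tendsto_natCast_atTop_atTop
    exact le_of_lt (lt_of_le_of_lt (Nat.cast_le.mpr (hφ.le_apply)) (hxn (φ k)))

lemma asym_bounded {n : ℕ} {A : Set (Fin n → ℝ)} (hA : Bornology.IsBounded A)
    {v : Fin n → ℝ} (hv : v ∈ asymCone A) : v = 0 := by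
  obtain ⟨t, x, ht, hxA, hconv⟩ := hv
  obtain ⟨M, hM⟩ := isBounded_iff_forall_norm_le.mp hA
  have h0 : Tendsto (fun k => (t k)⁻¹ • x k) atTop (nhds 0) := by
    have hb : Tendsto (fun k => (t k)⁻¹ * M) atTop (nhds 0) := by
      simpa using (tendsto_inv_atTop_zero.comp ht).mul_const M
    refine squeeze_zero_norm' ?_ hb
    filter_upwards [ht.eventually_gt_atTop 0] with k hk
    rw [norm_smul, norm_inv, Real.norm_eq_abs, abs_of_pos hk]
    exact mul_le_mul_of_nonneg_left (hM _ (hxA k)) (by positivity)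
  exact tendsto_nhds_unique hconv h0

lemma zero_mem_asym {n : ℕ} {A : Set (Fin n → ℝ)} (hA : A.Nonempty) :
    (0 : Fin n → ℝ) ∈ asymCone A := by
  obtain ⟨a, ha⟩ := hA
  refine ⟨fun k => (k : ℝ) + 1, fun _ => a, ?_, fun _ => ha, ?_⟩
  · exact tendsto_atTop_add_const_right _ 1 tendsto_natCast_atTop_atTop
  · have h1 : Tendsto (fun k : ℕ => ((k : ℝ) + 1)⁻¹) atTop (nhds 0) :=
      tendsto_inv_atTop_zero.comp (tendsto_atTop_add_const_right _ 1 tendsto_natCast_atTop_atTop)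
    simpa using h1.smul_const a

lemma asymCone_singleton_zero {n : ℕ} :
    asymCone ({0} : Set (Fin n → ℝ)) = {0} := by
  ext v
  constructor
  · intro hv
    exact asym_bounded Bornology.isBounded_singleton hv
  · intro hv
    rw [Set.mem_singleton_iff] at hv
    subst hv
    exact zero_mem_asym (Set.singleton_nonempty 0)

lemma SOLmin_singleton_zero {n : ℕ} (p : (Fin n → ℝ) → ℝ) :
    SOLmin ({0} : Set (Fin n → ℝ)) p = {0} := by
  ext z
  constructor
  · exact fun h => h.1
  · intro hz
    refine ⟨hz, fun y hy => ?_⟩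
    rw [Set.mem_singleton_iff] at hz hy
    rw [hz, hy]

lemma SOLw_singleton_zero {n q : ℕ} (i0 : Fin q) (g : Fin q → (Fin n → ℝ) → ℝ) :
    SOLw ({0} : Set (Fin n → ℝ)) g = {0} := by
  ext z
  constructor
  · exact fun h => h.1
  · intro hz
    refine ⟨hz, fun ⟨y, hy, hlt⟩ => ?_⟩
    rw [Set.mem_singleton_iff] at hz hy
    have := hlt i0
    rw [hz, hy] at this
    exact lt_irrefl _ this

lemma SOLs_singleton_zero {n q : ℕ} (g : Fin q → (Fin n → ℝ) → ℝ) :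
    SOLs ({0} : Set (Fin n → ℝ)) g = {0} := by
  ext z
  constructor
  · exact fun h => h.1
  · intro hz
    refine ⟨hz, fun ⟨y, hy, _, i, hne⟩ => ?_⟩
    rw [Set.mem_singleton_iff] at hz hy
    rw [hz, hy] at hne
    exact hne rfl

lemma recPoly_zero_eval {n : ℕ} (p : MvPolynomial (Fin n) ℝ) (hdp : 1 ≤ p.totalDegree) :
    recPoly p (0 : Fin n → ℝ) = 0 := by
  have h : (0 : Fin n → ℝ) = (0:ℝ) • (0 : Fin n → ℝ) := by simp
  show eval (0 : Fin n → ℝ) (homogeneousComponent p.totalDegree p) = 0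
  rw [h, eval_smul_homog (homogeneousComponent_isHomogeneous _ p)]
  rw [zero_pow (by omega), zero_mul]

theorem stmt11 {n q : ℕ} (K : Set (Fin n → ℝ)) (hKne : K.Nonempty) (hKcl : IsClosed K)
    (f : Fin q → MvPolynomial (Fin n) ℝ) (hdeg : ∀ i, 1 ≤ (f i).totalDegree)
    (xbar : Fin n → ℝ) (hx : xbar ∈ K)
    (I : Finset (Fin q)) (hI : I.Nonempty)
    (hbd : ∀ i ∈ I, ∃ m : ℝ, ∀ x ∈ {x ∈ K | ∀ j, eval x (f j) ≤ eval xbar (f j)},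
      m ≤ eval x (f i)) :
    ((∀ x : ℕ → (Fin n → ℝ), (∀ k, x k ∈ K) →
        Filter.Tendsto (fun k => ‖x k‖) Filter.atTop Filter.atTop →
        (∀ k, ∀ i, eval (x k) (f i) ≤ eval xbar (f i)) →
        Filter.Tendsto (fun k => ‖(fun i : {i // i ∈ I} => eval (x k) (f i.1))‖)
          Filter.atTop Filter.atTop) ↔
      (∃ S : Set (Fin n → ℝ), IsClosed S ∧
        asymCone {x ∈ K | ∀ j, eval x (f j) ≤ eval xbar (f j)} ⊆ asymCone S ∧
        asymCone S ⊆ asymCone K ∧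
        ∃ lam : Fin q → ℝ, (∀ i, 0 ≤ lam i) ∧ lam ≠ 0 ∧
          SOLmin (asymCone S) (recPoly (∑ i, MvPolynomial.C (lam i) * f i)) = {0})) ∧
    ((∃ S : Set (Fin n → ℝ), IsClosed S ∧
        asymCone {x ∈ K | ∀ j, eval x (f j) ≤ eval xbar (f j)} ⊆ asymCone S ∧
        asymCone S ⊆ asymCone K ∧
        ∃ lam : Fin q → ℝ, (∀ i, 0 ≤ lam i) ∧ lam ≠ 0 ∧
          SOLmin (asymCone S) (recPoly (∑ i, MvPolynomial.C (lam i) * f i)) = {0}) ↔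
      (∃ S : Set (Fin n → ℝ), IsClosed S ∧
        asymCone {x ∈ K | ∀ j, eval x (f j) ≤ eval xbar (f j)} ⊆ asymCone S ∧
        asymCone S ⊆ asymCone K ∧
        SOLw (asymCone S) (fun i => recPoly (f i)) = {0})) ∧
    ((∃ S : Set (Fin n → ℝ), IsClosed S ∧
        asymCone {x ∈ K | ∀ j, eval x (f j) ≤ eval xbar (f j)} ⊆ asymCone S ∧
        asymCone S ⊆ asymCone K ∧
        SOLw (asymCone S) (fun i => recPoly (f i)) = {0}) ↔
      (∃ S : Set (Fin n → ℝ), IsClosed S ∧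
        asymCone {x ∈ K | ∀ j, eval x (f j) ≤ eval xbar (f j)} ⊆ asymCone S ∧
        asymCone S ⊆ asymCone K ∧
        SOLs (asymCone S) (fun i => recPoly (f i)) = {0})) := by
  classical
  obtain ⟨i0, hi0⟩ := hI
  set Kx : Set (Fin n → ℝ) := {x ∈ K | ∀ j, eval x (f j) ≤ eval xbar (f j)} with hKxdef
  -- boundedness of Kx is the pivot
  set B : Prop := Bornology.IsBounded Kx with hBdef
  -- lower bounds, as a total function
  set m : Fin q → ℝ := fun i => if h : i ∈ I then (hbd i h).choose else 0 with hmdef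
  have hm : ∀ i (h : i ∈ I), ∀ x ∈ Kx, m i ≤ eval x (f i) := by
    intro i h
    rw [hmdef]
    simp only [dif_pos h]
    exact (hbd i h).choose_spec
  -- (i) → B
  have hB_of_P1 : (∀ x : ℕ → (Fin n → ℝ), (∀ k, x k ∈ K) →
        Filter.Tendsto (fun k => ‖x k‖) Filter.atTop Filter.atTop →
        (∀ k, ∀ i, eval (x k) (f i) ≤ eval xbar (f i)) →
        Filter.Tendsto (fun k => ‖(fun i : {i // i ∈ I} => eval (x k) (f i.1))‖)
          Filter.atTop Filter.atTop) → B := by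
    intro hP1
    by_contra hB
    have h : ∀ k : ℕ, ∃ x ∈ Kx, (k : ℝ) < ‖x‖ := by
      intro k
      by_contra hc
      push_neg at hc
      exact hB (isBounded_iff_forall_norm_le.mpr ⟨k, hc⟩)
    choose x hxKx hxn using h
    have htend := hP1 x (fun k => (hxKx k).1)
      (tendsto_atTop_mono (fun k => le_of_lt (hxn k)) tendsto_natCast_atTop_atTop)
      (fun k i => (hxKx k).2 i)
    set B0 : ℝ := I.sup' ⟨i0, hi0⟩ (fun i => max |m i| |eval xbar (f i)|) with hB0
    have hB0nn : 0 ≤ B0 := by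
      rw [hB0]
      exact le_trans (le_trans (abs_nonneg (m i0)) (le_max_left _ _))
        (Finset.le_sup' (fun i => max |m i| |eval xbar (f i)|) hi0)
    have hbound : ∀ k, ‖(fun i : {i // i ∈ I} => eval (x k) (f i.1))‖ ≤ B0 := by
      intro k
      rw [pi_norm_le_iff_of_nonneg hB0nn]
      intro i
      rw [Real.norm_eq_abs]
      exact le_trans (abs_le_max_abs_abs (hm i.1 i.2 (x k) (hxKx k)) ((hxKx k).2 i.1))
        (Finset.le_sup' (fun i => max |m i| |eval xbar (f i)|) i.2)
    obtain ⟨k, hk⟩ := (htend.eventually_gt_atTop B0).exists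
    exact absurd (hbound k) (not_le.mpr hk)
  -- B → (i)
  have hP1_of_B : B → (∀ x : ℕ → (Fin n → ℝ), (∀ k, x k ∈ K) →
        Filter.Tendsto (fun k => ‖x k‖) Filter.atTop Filter.atTop →
        (∀ k, ∀ i, eval (x k) (f i) ≤ eval xbar (f i)) →
        Filter.Tendsto (fun k => ‖(fun i : {i // i ∈ I} => eval (x k) (f i.1))‖)
          Filter.atTop Filter.atTop) := by
    intro hB x hxK hnorm hle
    exfalso
    obtain ⟨M, hM⟩ := isBounded_iff_forall_norm_le.mp hB
    obtain ⟨k, hk⟩ := (hnorm.eventually_gt_atTop M).exists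
    exact absurd (hM (x k) ⟨hxK k, hle k⟩) (not_le.mpr hk)
  -- B → (ii), (iii), (iv) via S = {0}
  have hsub1 : B → asymCone Kx ⊆ asymCone ({0} : Set (Fin n → ℝ)) := by
    intro hB v hv
    rw [asymCone_singleton_zero]
    exact asym_bounded hB hv
  have hsub2 : asymCone ({0} : Set (Fin n → ℝ)) ⊆ asymCone K := by
    rw [asymCone_singleton_zero]
    intro v hv
    rw [Set.mem_singleton_iff] at hv
    exact hv ▸ zero_mem_asym hKne
  have hii_of_B : B → (∃ S : Set (Fin n → ℝ), IsClosed S ∧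
        asymCone Kx ⊆ asymCone S ∧ asymCone S ⊆ asymCone K ∧
        ∃ lam : Fin q → ℝ, (∀ i, 0 ≤ lam i) ∧ lam ≠ 0 ∧
          SOLmin (asymCone S) (recPoly (∑ i, MvPolynomial.C (lam i) * f i)) = {0}) := by
    intro hB
    refine ⟨{0}, isClosed_singleton, hsub1 hB, hsub2, fun _ => 1, fun _ => zero_le_one, ?_, ?_⟩
    · intro hcon
      exact one_ne_zero (congrFun hcon i0)
    · rw [asymCone_singleton_zero]
      exact SOLmin_singleton_zero _
  have hiii_of_B : B → (∃ S : Set (Fin n → ℝ), IsClosed S ∧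
        asymCone Kx ⊆ asymCone S ∧ asymCone S ⊆ asymCone K ∧
        SOLw (asymCone S) (fun i => recPoly (f i)) = {0}) := by
    intro hB
    refine ⟨{0}, isClosed_singleton, hsub1 hB, hsub2, ?_⟩
    rw [asymCone_singleton_zero]
    exact SOLw_singleton_zero i0 _
  have hiv_of_B : B → (∃ S : Set (Fin n → ℝ), IsClosed S ∧
        asymCone Kx ⊆ asymCone S ∧ asymCone S ⊆ asymCone K ∧
        SOLs (asymCone S) (fun i => recPoly (f i)) = {0}) := by
    intro hB
    refine ⟨{0}, isClosed_singleton, hsub1 hB, hsub2, ?_⟩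
    rw [asymCone_singleton_zero]
    exact SOLs_singleton_zero _
  -- (ii) → B
  have hB_of_ii : (∃ S : Set (Fin n → ℝ), IsClosed S ∧
        asymCone Kx ⊆ asymCone S ∧ asymCone S ⊆ asymCone K ∧
        ∃ lam : Fin q → ℝ, (∀ i, 0 ≤ lam i) ∧ lam ≠ 0 ∧
          SOLmin (asymCone S) (recPoly (∑ i, MvPolynomial.C (lam i) * f i)) = {0}) → B := by
    rintro ⟨S, _, h1, _, lam, hlam, hlamne, hmin⟩
    by_contra hB
    obtain ⟨v, t, xs, hv1, ht, hxA, hconv⟩ := exists_unit_dir hB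
    have hvKx : v ∈ asymCone Kx := ⟨t, xs, ht, hxA, hconv⟩
    have hvS : v ∈ asymCone S := h1 hvKx
    have hvne : v ≠ 0 := fun h => by simp [h] at hv1
    set p : MvPolynomial (Fin n) ℝ := ∑ i, MvPolynomial.C (lam i) * f i with hp
    rcases Nat.eq_zero_or_pos p.totalDegree with h0 | hpos
    · have hconst : ∀ z, recPoly p z = MvPolynomial.coeff 0 p := by
        intro z
        show eval z (homogeneousComponent p.totalDegree p) = _
        rw [h0, homogeneousComponent_zero, eval_C]
      have hS0 : asymCone S = SOLmin (asymCone S) (recPoly p) := by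
        ext z
        exact ⟨fun h => ⟨h, fun y _ => by rw [hconst, hconst]⟩, fun h => h.1⟩
      rw [hS0, hmin] at hvS
      exact hvne hvS
    · have hC : ∀ k, eval (xs k) p ≤ ∑ i, lam i * eval xbar (f i) := by
        intro k
        rw [hp, map_sum]
        refine Finset.sum_le_sum fun i _ => ?_
        rw [eval_mul, eval_C]
        exact mul_le_mul_of_nonneg_left ((hxA k).2 i) (hlam i)
      have hle0 : recPoly p v ≤ 0 :=
        recPoly_le_zero_aux p hpos _ t xs v ht hconv hC
      have h0min : (0 : Fin n → ℝ) ∈ SOLmin (asymCone S) (recPoly p) := by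
        rw [hmin]; rfl
      have hp0 : recPoly p 0 = 0 := recPoly_zero_eval p hpos
      have hge0 : 0 ≤ recPoly p v := hp0 ▸ h0min.2 v hvS
      have hveq : recPoly p v = 0 := le_antisymm hle0 hge0
      have hvmin : v ∈ SOLmin (asymCone S) (recPoly p) := by
        refine ⟨hvS, fun y hy => ?_⟩
        rw [hveq, ← hp0]
        exact h0min.2 y hy
      rw [hmin] at hvmin
      exact hvne hvmin
  -- (iii) → B
  have hB_of_iii : (∃ S : Set (Fin n → ℝ), IsClosed S ∧
        asymCone Kx ⊆ asymCone S ∧ asymCone S ⊆ asymCone K ∧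
        SOLw (asymCone S) (fun i => recPoly (f i)) = {0}) → B := by
    rintro ⟨S, _, h1, _, hw⟩
    by_contra hB
    obtain ⟨v, t, xs, hv1, ht, hxA, hconv⟩ := exists_unit_dir hB
    have hvKx : v ∈ asymCone Kx := ⟨t, xs, ht, hxA, hconv⟩
    have hvS : v ∈ asymCone S := h1 hvKx
    have hvne : v ≠ 0 := fun h => by simp [h] at hv1
    have hfle : ∀ i, recPoly (f i) v ≤ 0 := fun i =>
      recPoly_le_zero_aux (f i) (hdeg i) (eval xbar (f i)) t xs v ht hconv
        (fun k => (hxA k).2 i)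
    have hf0 : ∀ i, recPoly (f i) 0 = 0 := fun i => recPoly_zero_eval (f i) (hdeg i)
    have h0w : (0 : Fin n → ℝ) ∈ SOLw (asymCone S) (fun i => recPoly (f i)) := by
      rw [hw]; rfl
    have hvnw : v ∉ SOLw (asymCone S) (fun i => recPoly (f i)) := by
      rw [hw]
      exact hvne
    have hex : ∃ y ∈ asymCone S, ∀ i, recPoly (f i) y < recPoly (f i) v := by
      by_contra hne
      exact hvnw ⟨hvS, hne⟩
    obtain ⟨y, hyS, hylt⟩ := hex
    refine h0w.2 ⟨y, hyS, fun i => ?_⟩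
    show recPoly (f i) y < recPoly (f i) 0
    rw [hf0 i]
    exact lt_of_lt_of_le (hylt i) (hfle i)
  -- (iv) → B
  have hB_of_iv : (∃ S : Set (Fin n → ℝ), IsClosed S ∧
        asymCone Kx ⊆ asymCone S ∧ asymCone S ⊆ asymCone K ∧
        SOLs (asymCone S) (fun i => recPoly (f i)) = {0}) → B := by
    rintro ⟨S, _, h1, _, hs⟩
    by_contra hB
    obtain ⟨v, t, xs, hv1, ht, hxA, hconv⟩ := exists_unit_dir hB
    have hvKx : v ∈ asymCone Kx := ⟨t, xs, ht, hxA, hconv⟩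
    have hvS : v ∈ asymCone S := h1 hvKx
    have hvne : v ≠ 0 := fun h => by simp [h] at hv1
    have hfle : ∀ i, recPoly (f i) v ≤ 0 := fun i =>
      recPoly_le_zero_aux (f i) (hdeg i) (eval xbar (f i)) t xs v ht hconv
        (fun k => (hxA k).2 i)
    have hf0 : ∀ i, recPoly (f i) 0 = 0 := fun i => recPoly_zero_eval (f i) (hdeg i)
    have h0s : (0 : Fin n → ℝ) ∈ SOLs (asymCone S) (fun i => recPoly (f i)) := by
      rw [hs]; rfl
    have hvns : v ∉ SOLs (asymCone S) (fun i => recPoly (f i)) := by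
      rw [hs]
      exact hvne
    have hex : ∃ y ∈ asymCone S, (∀ i, recPoly (f i) y ≤ recPoly (f i) v) ∧
        (∃ i, recPoly (f i) y ≠ recPoly (f i) v) := by
      by_contra hne
      exact hvns ⟨hvS, hne⟩
    obtain ⟨y, hyS, hyle, i1, hne1⟩ := hex
    refine h0s.2 ⟨y, hyS, fun i => ?_, i1, ?_⟩
    · show recPoly (f i) y ≤ recPoly (f i) 0
      rw [hf0 i]
      exact le_trans (hyle i) (hfle i)
    · show recPoly (f i1) y ≠ recPoly (f i1) 0
      rw [hf0 i1]
      exact ne_of_lt (lt_of_lt_of_le (lt_of_le_of_ne (hyle i1) hne1) (hfle i1))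
  exact ⟨⟨fun h => hii_of_B (hB_of_P1 h), fun h => hP1_of_B (hB_of_ii h)⟩,
    ⟨fun h => hiii_of_B (hB_of_ii h), fun h => hii_of_B (hB_of_iii h)⟩,
    ⟨fun h => hiv_of_B (hB_of_iii h), fun h => hiii_of_B (hB_of_iv h)⟩⟩
end
end

section
/- Let K ⊆ ℝⁿ be a nonempty closed set, f = (f_1,…,f_q) a vector polynomial, x̄ ∈ K, and λ ∈ ℝ^q with λ_i ≥ 0 for all i and λ ≠ 0. Then the sublevel set K_x̄ is bounded if and only if there exists a nonempty closed set S ⊆ ℝⁿ with (K_x̄)_∞ ⊆ S_∞ ⊆ K_∞ such that at least one of the following holds: (i) SOL(S_∞, (Σ_{i=1}^q λ_i f_i)^∞) = {0}; (ii) SOL^s(S_∞, f^∞) = {0}; (iii) SOL^w(S_∞, f^∞) = {0}. -/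
open Filter Topology MvPolynomial Bornology

noncomputable section

lemma isHomogeneous_eval_smul {N m : ℕ} {p : MvPolynomial (Fin N) ℝ}
    (hp : p.IsHomogeneous m) (c : ℝ) (y : Fin N → ℝ) :
    eval (c • y) p = c ^ m * eval y p := by
  rw [eval_eq', eval_eq', Finset.mul_sum]
  refine Finset.sum_congr rfl fun d hd => ?_
  have hdm : ∑ i, d i = m := by
    have h1 := hp (mem_support_iff.mp hd)
    rw [← h1]
    have : Finsupp.degree = Finsupp.weight (1 : Fin N → ℕ) :=
      (Finsupp.degree_eq_weight_one (R := ℕ) (σ := Fin N))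
    rw [← DFunLike.congr_fun this d, Finsupp.degree_apply]
    exact (Finset.sum_subset (Finset.subset_univ _)
      (fun i _ hi => Finsupp.notMem_support_iff.mp hi)).symm
  have : ∀ i : Fin N, (c • y) i ^ d i = c ^ d i * y i ^ d i := by
    intro i; simp [mul_pow]
  rw [Finset.prod_congr rfl (fun i _ => this i), Finset.prod_mul_distrib,
    Finset.prod_pow_eq_pow_sum, hdm]
  ring

lemma asymCone_mono {N : ℕ} {A B : Set (Fin N → ℝ)} (h : A ⊆ B) :
    asymCone A ⊆ asymCone B := by
  rintro v ⟨t, x, ht, hx, hv⟩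
  exact ⟨t, x, ht, fun k => h (hx k), hv⟩

lemma asymCone_of_bounded {N : ℕ} {A : Set (Fin N → ℝ)} (hne : A.Nonempty)
    (hb : IsBounded A) : asymCone A = {0} := by
  apply Set.eq_singleton_iff_unique_mem.mpr
  constructor
  · obtain ⟨a, ha⟩ := hne
    refine ⟨fun k => (k : ℝ), fun _ => a, tendsto_natCast_atTop_atTop, fun _ => ha, ?_⟩
    have h1 : Tendsto (fun k : ℕ => ((k : ℝ))⁻¹) atTop (𝓝 0) :=
      (tendsto_natCast_atTop_atTop (R := ℝ)).inv_tendsto_atTop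
    simpa using h1.smul_const a
  · rintro v ⟨t, x, ht, hx, hv⟩
    obtain ⟨C, hC⟩ := (isBounded_iff_forall_norm_le).mp hb
    have hlim : Tendsto (fun k => (t k)⁻¹ * C) atTop (𝓝 0) := by
      simpa using ht.inv_tendsto_atTop.mul_const C
    have hbound : ∀ᶠ k in atTop, ‖(t k)⁻¹ • x k‖ ≤ (t k)⁻¹ * C := by
      filter_upwards [ht.eventually_gt_atTop 0] with k hk
      rw [norm_smul]
      have : |((t k)⁻¹ : ℝ)| = (t k)⁻¹ := abs_of_pos (by positivity)
      rw [Real.norm_eq_abs, this]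
      exact mul_le_mul_of_nonneg_left (hC _ (hx k)) (by positivity)
    have := squeeze_zero_norm' hbound hlim
    exact tendsto_nhds_unique hv this

lemma exists_ne_zero_mem_asymCone {N : ℕ} {A : Set (Fin N → ℝ)}
    (h : ¬ IsBounded A) : ∃ v ∈ asymCone A, v ≠ 0 := by
  have hex : ∀ k : ℕ, ∃ x ∈ A, (k : ℝ) < ‖x‖ := by
    intro k
    by_contra hk
    push_neg at hk
    exact h (isBounded_iff_forall_norm_le.mpr ⟨k, hk⟩)
  choose x hxA hxn using hex
  have htpos : ∀ k, 0 < ‖x k‖ := fun k => lt_of_le_of_lt (Nat.cast_nonneg k) (hxn k)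
  set y : ℕ → (Fin N → ℝ) := fun k => (‖x k‖)⁻¹ • x k with hy
  have hyS : ∀ k, y k ∈ Metric.sphere (0 : Fin N → ℝ) 1 := by
    intro k
    simp only [Metric.mem_sphere, dist_zero_right, hy, norm_smul, Real.norm_eq_abs,
      abs_of_pos (inv_pos.mpr (htpos k))]
    field_simp
    exact div_self (htpos k).ne'
  obtain ⟨v, hvcl, φ, hφ, hconv⟩ :=
    tendsto_subseq_of_bounded (Metric.isBounded_sphere
      (x := (0 : Fin N → ℝ)) (r := 1)) hyS
  have hvS : v ∈ Metric.sphere (0 : Fin N → ℝ) 1 := by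
    rwa [IsClosed.closure_eq Metric.isClosed_sphere] at hvcl
  refine ⟨v, ⟨fun k => ‖x (φ k)‖, fun k => x (φ k), ?_, fun k => hxA _, hconv⟩, ?_⟩
  · apply tendsto_atTop_mono (fun k => ?_) tendsto_natCast_atTop_atTop
    calc ((k : ℝ)) ≤ (φ k : ℝ) := by exact_mod_cast hφ.le_apply
    _ ≤ ‖x (φ k)‖ := (hxn (φ k)).le
  · intro h0
    rw [h0] at hvS
    simp at hvS

lemma tendsto_eval_div {N : ℕ} (p : MvPolynomial (Fin N) ℝ) {t : ℕ → ℝ}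
    {x : ℕ → (Fin N → ℝ)} {v : Fin N → ℝ}
    (ht : Tendsto t atTop atTop)
    (hx : Tendsto (fun k => (t k)⁻¹ • x k) atTop (𝓝 v)) :
    Tendsto (fun k => ((t k) ^ p.totalDegree)⁻¹ * eval (x k) p) atTop
      (𝓝 (recPoly p v)) := by
  set d := p.totalDegree with hd
  set y : ℕ → (Fin N → ℝ) := fun k => (t k)⁻¹ • x k with hy
  have hterm : ∀ e ∈ Finset.range (d + 1),
      Tendsto (fun k => ((t k) ^ d)⁻¹ * ((t k) ^ e *
        eval (y k) (homogeneousComponent e p))) atTop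
        (𝓝 (if e = d then recPoly p v else 0)) := by
    intro e he
    have heval : Tendsto (fun k => eval (y k) (homogeneousComponent e p)) atTop
        (𝓝 (eval v (homogeneousComponent e p))) :=
      (MvPolynomial.continuous_eval (p := homogeneousComponent e p)).continuousAt.tendsto.comp hx
    rcases eq_or_ne e d with rfl | hne
    · simp only [if_pos rfl]
      have hcg : ∀ᶠ k in atTop, ((t k) ^ d)⁻¹ * ((t k) ^ d *
          eval (y k) (homogeneousComponent d p)) = eval (y k) (homogeneousComponent d p) := by
        filter_upwards [ht.eventually_gt_atTop 0] with k hk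
        field_simp
      exact Tendsto.congr' (hcg.mono fun k hk => hk.symm) (by simpa [recPoly, ← hd] using heval)
    · simp only [if_neg hne]
      have hlt : e < d := lt_of_le_of_ne (Nat.lt_succ_iff.mp (Finset.mem_range.mp he)) hne
      have hc : Tendsto (fun k => ((t k) ^ d)⁻¹ * (t k) ^ e) atTop (𝓝 0) := by
        have h1 : Tendsto (fun k => ((t k) ^ (d - e))⁻¹) atTop (𝓝 0) :=
          ((tendsto_pow_atTop (by omega : d - e ≠ 0)).comp ht).inv_tendsto_atTop
        apply Tendsto.congr' _ h1
        filter_upwards [ht.eventually_gt_atTop 0] with k hk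
        have : (t k) ^ d = (t k) ^ (d - e) * (t k) ^ e := by
          rw [← pow_add]; congr 1; omega
        rw [this, mul_inv]
        field_simp
      have := hc.mul heval
      simpa [mul_assoc] using this
  have hsum := tendsto_finset_sum (Finset.range (d + 1)) hterm
  have hsumval : (∑ e ∈ Finset.range (d + 1), if e = d then recPoly p v else 0)
      = recPoly p v := by
    rw [Finset.sum_ite_eq' (Finset.range (d+1)) d (fun _ => recPoly p v)]
    simp
  rw [hsumval] at hsum
  apply Tendsto.congr' _ hsum
  filter_upwards [ht.eventually_gt_atTop 0] with k hk
  have hxk : x k = (t k) • y k := by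
    rw [hy]; simp [smul_smul, mul_inv_cancel₀ hk.ne']
  rw [hxk]
  conv_rhs => rw [← MvPolynomial.sum_homogeneousComponent p]
  rw [map_sum, Finset.mul_sum]
  refine Finset.sum_congr rfl fun e he => ?_
  simp only [isHomogeneous_eval_smul (homogeneousComponent_isHomogeneous e p)]

lemma recPoly_nonpos {N : ℕ} (p : MvPolynomial (Fin N) ℝ) (hdp : 1 ≤ p.totalDegree)
    {t : ℕ → ℝ} {x : ℕ → (Fin N → ℝ)} {v : Fin N → ℝ}
    (ht : Tendsto t atTop atTop)
    (hx : Tendsto (fun k => (t k)⁻¹ • x k) atTop (𝓝 v))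
    (M : ℝ) (hM : ∀ k, eval (x k) p ≤ M) : recPoly p v ≤ 0 := by
  have h1 := tendsto_eval_div p ht hx
  have h2 : Tendsto (fun k => ((t k) ^ p.totalDegree)⁻¹ * M) atTop (𝓝 0) := by
    simpa using ((tendsto_pow_atTop (by omega : p.totalDegree ≠ 0)).comp
      ht).inv_tendsto_atTop.mul_const M
  refine le_of_tendsto_of_tendsto h1 h2 ?_
  filter_upwards [ht.eventually_gt_atTop 0] with k hk
  exact mul_le_mul_of_nonneg_left (hM k) (by positivity)

lemma recPoly_zero {N : ℕ} (p : MvPolynomial (Fin N) ℝ) (hdp : 1 ≤ p.totalDegree) :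
    recPoly p 0 = 0 := by
  have h := isHomogeneous_eval_smul
    (homogeneousComponent_isHomogeneous p.totalDegree p) (0 : ℝ) (0 : Fin N → ℝ)
  rw [recPoly]
  have h0 : (0 : ℝ) • (0 : Fin N → ℝ) = 0 := by simp
  rw [← h0, h, zero_pow (by omega : p.totalDegree ≠ 0), zero_mul]

theorem stmt12 {n q : ℕ} (K : Set (Fin n → ℝ)) (hKne : K.Nonempty) (hKcl : IsClosed K)
    (f : Fin q → MvPolynomial (Fin n) ℝ) (hdeg : ∀ i, 1 ≤ (f i).totalDegree)
    (xbar : Fin n → ℝ) (hx : xbar ∈ K)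
    (lam : Fin q → ℝ) (hlam : ∀ i, 0 ≤ lam i) (hlam0 : lam ≠ 0) :
    Bornology.IsBounded {x ∈ K | ∀ j, eval x (f j) ≤ eval xbar (f j)} ↔
      ∃ S : Set (Fin n → ℝ), S.Nonempty ∧ IsClosed S ∧
        asymCone {x ∈ K | ∀ j, eval x (f j) ≤ eval xbar (f j)} ⊆ asymCone S ∧
        asymCone S ⊆ asymCone K ∧
        (SOLmin (asymCone S) (recPoly (∑ i, MvPolynomial.C (lam i) * f i)) = {0} ∨
         SOLs (asymCone S) (fun i => recPoly (f i)) = {0} ∨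
         SOLw (asymCone S) (fun i => recPoly (f i)) = {0}) := by
  set A : Set (Fin n → ℝ) := {x ∈ K | ∀ j, eval x (f j) ≤ eval xbar (f j)} with hA
  have hAne : A.Nonempty := ⟨xbar, hx, fun j => le_refl _⟩
  constructor
  · intro hb
    have hAcl : IsClosed A := by
      have hrw : A = K ∩ ⋂ j, {x | eval x (f j) ≤ eval xbar (f j)} := by
        ext z; simp [hA, Set.mem_iInter]
      rw [hrw]
      exact hKcl.inter (isClosed_iInter fun j =>
        isClosed_le (MvPolynomial.continuous_eval (f j)) continuous_const)
    refine ⟨A, hAne, hAcl, subset_rfl, asymCone_mono (fun z hz => hz.1), Or.inl ?_⟩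
    rw [asymCone_of_bounded hAne hb]
    ext z
    simp only [SOLmin, Set.mem_setOf_eq, Set.mem_singleton_iff]
    constructor
    · rintro ⟨h1, -⟩; simpa using h1
    · rintro rfl
      exact ⟨rfl, fun y hy => by rw [show y = (0 : Fin n → ℝ) from hy]⟩
  · rintro ⟨S, -, -, hsub, -, hcase⟩
    by_contra hb
    obtain ⟨v, hvA, hv0⟩ := exists_ne_zero_mem_asymCone hb
    have hvS := hsub hvA
    obtain ⟨t, x, ht, hxA, hxv⟩ := hvA
    have hfle : ∀ i, recPoly (f i) v ≤ 0 := fun i =>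
      recPoly_nonpos (f i) (hdeg i) ht hxv (eval xbar (f i)) (fun k => (hxA k).2 i)
    have hz : ∀ i, recPoly (f i) 0 = 0 := fun i => recPoly_zero (f i) (hdeg i)
    apply hv0
    rcases hcase with hmin | hs | hw
    · set p := ∑ i, MvPolynomial.C (lam i) * f i with hp
      have hM : ∀ k, eval (x k) p ≤ eval xbar p := by
        intro k
        simp only [hp, map_sum, map_mul, eval_C]
        exact Finset.sum_le_sum fun i _ =>
          mul_le_mul_of_nonneg_left ((hxA k).2 i) (hlam i)
      have h0 : (0 : Fin n → ℝ) ∈ SOLmin (asymCone S) (recPoly p) := by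
        rw [hmin]; exact Set.mem_singleton 0
      have hle : recPoly p v ≤ recPoly p 0 := by
        rcases Nat.eq_zero_or_pos p.totalDegree with h0d | h1d
        · have : recPoly p v = recPoly p 0 := by
            simp [recPoly, h0d, homogeneousComponent_zero]
          exact this.le
        · rw [recPoly_zero p h1d]
          exact recPoly_nonpos p h1d ht hxv _ hM
      have hvmem : v ∈ SOLmin (asymCone S) (recPoly p) :=
        ⟨hvS, fun y hy => hle.trans (h0.2 y hy)⟩
      rw [hmin] at hvmem; exact hvmem
    · have h0 : (0 : Fin n → ℝ) ∈ SOLs (asymCone S) (fun i => recPoly (f i)) := by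
        rw [hs]; exact Set.mem_singleton 0
      have hall : ∀ i, recPoly (f i) v = 0 := by
        by_contra hc; push_neg at hc; obtain ⟨i, hi⟩ := hc
        exact h0.2 ⟨v, hvS, fun j => by
            show recPoly (f j) v ≤ recPoly (f j) 0
            rw [hz j]; exact hfle j,
          ⟨i, by show recPoly (f i) v ≠ recPoly (f i) 0; rw [hz i]; exact hi⟩⟩
      have hvmem : v ∈ SOLs (asymCone S) (fun i => recPoly (f i)) := by
        refine ⟨hvS, fun hcon => h0.2 ?_⟩
        obtain ⟨y, hyC, hyle, i, hine⟩ := hcon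
        refine ⟨y, hyC, fun j => ?_, ⟨i, ?_⟩⟩
        · show recPoly (f j) y ≤ recPoly (f j) 0
          have := hyle j
          simp only [hall j] at this
          rw [hz j]; exact this
        · show recPoly (f i) y ≠ recPoly (f i) 0
          simp only [hall i] at hine
          rw [hz i]; exact hine
      rw [hs] at hvmem; exact hvmem
    · have h0 : (0 : Fin n → ℝ) ∈ SOLw (asymCone S) (fun i => recPoly (f i)) := by
        rw [hw]; exact Set.mem_singleton 0
      have hvmem : v ∈ SOLw (asymCone S) (fun i => recPoly (f i)) := by
        refine ⟨hvS, fun hcon => h0.2 ?_⟩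
        obtain ⟨y, hyC, hlt⟩ := hcon
        exact ⟨y, hyC, fun i => (hlt i).trans_le ((hfle i).trans_eq (hz i).symm)⟩
      rw [hw] at hvmem; exact hvmem
end
end
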